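/- For the diagonal form Q = diag(−1,−3), the maximal squares cᵀQ⁻¹c of characteristic vectors in each of the 3 equivalence classes modulo 2Qℤ² are {−4, −4/3, −4/3}; for Q = [[−2,−1],[−1,−2]] they are {0, −8/3, −8/3}. -/

import Mathlib

open Matrix

/-- Square of a covector `c` with respect to `Q⁻¹` (over `ℚ`). -/
noncomputable def covSq (Q : Matrix (Fin 2) (Fin 2) ℤ) (c : Fin 2 → ℤ) : ℚ :=
  (fun i => (c i : ℚ)) ⬝ᵥ ((Q.map (Int.cast : ℤ → ℚ))⁻¹).mulVec (fun i => (c i : ℚ))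

/-- `c` is a characteristic vector for `Q`. -/
def IsCharVec (Q : Matrix (Fin 2) (Fin 2) ℤ) (c : Fin 2 → ℤ) : Prop :=
  ∀ i, c i ≡ Q i i [ZMOD 2]

/-- `c` and `c'` are equivalent modulo `2Qℤ²`. -/
def EquivMod2Q (Q : Matrix (Fin 2) (Fin 2) ℤ) (c c' : Fin 2 → ℤ) : Prop :=
  ∃ y : Fin 2 → ℤ, c' - c = (2 • Q).mulVec y

/-- `c` is a characteristic vector realizing the maximal square `v` of its
equivalence class modulo `2Qℤ²`. -/
noncomputable def MaxSq (Q : Matrix (Fin 2) (Fin 2) ℤ) (c : Fin 2 → ℤ) (v : ℚ) : Prop :=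
  IsCharVec Q c ∧ covSq Q c = v ∧
    ∀ c', IsCharVec Q c' → EquivMod2Q Q c c' → covSq Q c' ≤ v

/- ## Auxiliary lemmas -/

lemma map1 : (!![-1,0;0,-3] : Matrix (Fin 2) (Fin 2) ℤ).map (Int.cast : ℤ → ℚ) = !![-1,0;0,-3] := by
  ext i j; fin_cases i <;> fin_cases j <;> simp

lemma inv1 : (!![(-1:ℚ),0;0,-3])⁻¹ = !![-1,0;0,-1/3] := by
  apply inv_eq_right_inv
  ext i j; fin_cases i <;> fin_cases j <;> simp [Matrix.mul_apply, Fin.sum_univ_two] <;> norm_num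

lemma covSq1 (c : Fin 2 → ℤ) : covSq !![-1,0;0,-3] c = -(c 0:ℚ)^2 - (c 1:ℚ)^2/3 := by
  simp only [covSq, map1, inv1, Matrix.mulVec, dotProduct, Fin.sum_univ_two]
  simp [Fin.sum_univ_two]
  ring

lemma map2 : (!![-2,-1;-1,-2] : Matrix (Fin 2) (Fin 2) ℤ).map (Int.cast : ℤ → ℚ) = !![-2,-1;-1,-2] := by
  ext i j; fin_cases i <;> fin_cases j <;> simp

lemma inv2 : (!![(-2:ℚ),-1;-1,-2])⁻¹ = !![-2/3,1/3;1/3,-2/3] := by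
  apply inv_eq_right_inv
  ext i j; fin_cases i <;> fin_cases j <;> simp [Matrix.mul_apply, Fin.sum_univ_two] <;> norm_num

lemma covSq2 (c : Fin 2 → ℤ) :
    covSq !![-2,-1;-1,-2] c = (-2*(c 0:ℚ)^2 + 2*(c 0:ℚ)*(c 1:ℚ) - 2*(c 1:ℚ)^2)/3 := by
  simp only [covSq, map2, inv2, Matrix.mulVec, dotProduct, Fin.sum_univ_two]
  simp [Fin.sum_univ_two]
  ring

lemma equiv1 (c c' : Fin 2 → ℤ) : EquivMod2Q !![-1,0;0,-3] c c' ↔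
    (2 ∣ c' 0 - c 0) ∧ (6 ∣ c' 1 - c 1) := by
  constructor
  · rintro ⟨y, h⟩
    have h0 := congrFun h 0
    have h1 := congrFun h 1
    simp [Matrix.mulVec, dotProduct, Fin.sum_univ_two, Pi.sub_apply] at h0 h1
    exact ⟨⟨-(y 0), by omega⟩, ⟨-(y 1), by omega⟩⟩
  · rintro ⟨⟨a, ha⟩, ⟨b, hb⟩⟩
    refine ⟨![-a, -b], ?_⟩
    funext i
    fin_cases i <;>
      simp [Matrix.mulVec, dotProduct, Fin.sum_univ_two, Pi.sub_apply] <;> omega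

lemma equiv2 (c c' : Fin 2 → ℤ) : EquivMod2Q !![-2,-1;-1,-2] c c' ↔
    (2 ∣ c' 0 - c 0) ∧ (2 ∣ c' 1 - c 1) ∧ (6 ∣ (c' 0 - c 0) + (c' 1 - c 1)) := by
  constructor
  · rintro ⟨y, h⟩
    have h0 := congrFun h 0
    have h1 := congrFun h 1
    simp [Matrix.mulVec, dotProduct, Fin.sum_univ_two, Pi.sub_apply] at h0 h1
    refine ⟨⟨-2*y 0 - y 1, by omega⟩, ⟨-(y 0) - 2*y 1, by omega⟩, ⟨-(y 0) - y 1, by omega⟩⟩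
  · rintro ⟨⟨a, ha⟩, ⟨b, hb⟩, ⟨k, hk⟩⟩
    refine ⟨![k - a, k - b], ?_⟩
    funext i
    fin_cases i <;>
      simp [Matrix.mulVec, dotProduct, Fin.sum_univ_two, Pi.sub_apply] <;> omega

lemma char1 (c : Fin 2 → ℤ) : IsCharVec !![-1,0;0,-3] c ↔ (2 ∣ c 0 + 1) ∧ (2 ∣ c 1 + 1) := by
  constructor
  · intro h
    have h0 := (h 0).dvd
    have h1 := (h 1).dvd
    simp at h0 h1
    omega
  · rintro ⟨h0, h1⟩ i
    fin_cases i <;> simp [Int.ModEq] <;> omega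

lemma char2 (c : Fin 2 → ℤ) : IsCharVec !![-2,-1;-1,-2] c ↔ (2 ∣ c 0) ∧ (2 ∣ c 1) := by
  constructor
  · intro h
    have h0 := (h 0).dvd
    have h1 := (h 1).dvd
    simp at h0 h1
    omega
  · rintro ⟨h0, h1⟩ i
    fin_cases i <;> simp [Int.ModEq] <;> omega

lemma key (a b : ℤ) (h : a ≠ 0 ∨ b ≠ 0) : 1 ≤ a^2 - a*b + b^2 := by
  have h1 : 1 ≤ (2*a-b)^2 + 3*b^2 := by
    rcases eq_or_ne b 0 with rfl | hb
    · have ha : a ≠ 0 := by tauto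
      have : 1 ≤ a ∨ a ≤ -1 := by omega
      rcases this with h' | h' <;> nlinarith
    · have : 1 ≤ b ∨ b ≤ -1 := by omega
      rcases this with h' | h' <;> nlinarith [sq_nonneg (2*a-b)]
  have h2 : (2*a-b)^2 + 3*b^2 = 4*(a^2 - a*b + b^2) := by ring
  by_contra hc
  push_neg at hc
  have hc' : a^2 - a*b + b^2 ≤ 0 := Int.lt_add_one_iff.mp (by linarith)
  linarith

lemma sq_ge_one {x : ℤ} (h : x ≠ 0) : (1:ℤ) ≤ x^2 := by
  have : 1 ≤ x ∨ x ≤ -1 := by omega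
  rcases this with h' | h' <;> nlinarith

/-- The maximal squares of characteristic vectors in the 3 classes
modulo `2Qℤ²` are `{−4, −4/3, −4/3}` for `Q = diag(−1,−3)` and
`{0, −8/3, −8/3}` for `Q = [[−2,−1],[−1,−2]]`. -/
theorem stmt_16 :
    (∃ c₀ c₁ c₂ : Fin 2 → ℤ,
      MaxSq !![-1, 0; 0, -3] c₀ (-4) ∧
      MaxSq !![-1, 0; 0, -3] c₁ (-4/3) ∧
      MaxSq !![-1, 0; 0, -3] c₂ (-4/3) ∧
      ¬ EquivMod2Q !![-1, 0; 0, -3] c₀ c₁ ∧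
      ¬ EquivMod2Q !![-1, 0; 0, -3] c₀ c₂ ∧
      ¬ EquivMod2Q !![-1, 0; 0, -3] c₁ c₂ ∧
      ∀ c, IsCharVec !![-1, 0; 0, -3] c →
        EquivMod2Q !![-1, 0; 0, -3] c₀ c ∨ EquivMod2Q !![-1, 0; 0, -3] c₁ c ∨
          EquivMod2Q !![-1, 0; 0, -3] c₂ c) ∧
    (∃ c₀ c₁ c₂ : Fin 2 → ℤ,
      MaxSq !![-2, -1; -1, -2] c₀ 0 ∧
      MaxSq !![-2, -1; -1, -2] c₁ (-8/3) ∧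
      MaxSq !![-2, -1; -1, -2] c₂ (-8/3) ∧
      ¬ EquivMod2Q !![-2, -1; -1, -2] c₀ c₁ ∧
      ¬ EquivMod2Q !![-2, -1; -1, -2] c₀ c₂ ∧
      ¬ EquivMod2Q !![-2, -1; -1, -2] c₁ c₂ ∧
      ∀ c, IsCharVec !![-2, -1; -1, -2] c →
        EquivMod2Q !![-2, -1; -1, -2] c₀ c ∨ EquivMod2Q !![-2, -1; -1, -2] c₁ c ∨
          EquivMod2Q !![-2, -1; -1, -2] c₂ c) := by
  constructor
  · refine ⟨![1, 3], ![1, 1], ![1, -1], ?_, ?_, ?_, ?_, ?_, ?_, ?_⟩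
    · refine ⟨(char1 _).mpr (by norm_num), by rw [covSq1]; norm_num, ?_⟩
      intro c' hch heq
      rw [equiv1] at heq
      rw [char1] at hch
      simp at heq
      have h0 : c' 0 ≠ 0 := by omega
      have h1 : 3 ≤ c' 1 ∨ c' 1 ≤ -3 := by omega
      have k0 : (1:ℤ) ≤ (c' 0)^2 := sq_ge_one h0
      have k1 : (9:ℤ) ≤ (c' 1)^2 := by rcases h1 with h | h <;> nlinarith
      have q0 : (1:ℚ) ≤ (c' 0:ℚ)^2 := by exact_mod_cast k0
      have q1 : (9:ℚ) ≤ (c' 1:ℚ)^2 := by exact_mod_cast k1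
      rw [covSq1]
      linarith
    · refine ⟨(char1 _).mpr (by norm_num), by rw [covSq1]; norm_num, ?_⟩
      intro c' hch heq
      rw [char1] at hch
      have h0 : c' 0 ≠ 0 := by omega
      have h1 : c' 1 ≠ 0 := by omega
      have q0 : (1:ℚ) ≤ (c' 0:ℚ)^2 := by exact_mod_cast sq_ge_one h0
      have q1 : (1:ℚ) ≤ (c' 1:ℚ)^2 := by exact_mod_cast sq_ge_one h1
      rw [covSq1]
      linarith
    · refine ⟨(char1 _).mpr (by norm_num), by rw [covSq1]; norm_num, ?_⟩
      intro c' hch heq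
      rw [char1] at hch
      have h0 : c' 0 ≠ 0 := by omega
      have h1 : c' 1 ≠ 0 := by omega
      have q0 : (1:ℚ) ≤ (c' 0:ℚ)^2 := by exact_mod_cast sq_ge_one h0
      have q1 : (1:ℚ) ≤ (c' 1:ℚ)^2 := by exact_mod_cast sq_ge_one h1
      rw [covSq1]
      linarith
    · rw [equiv1]; simp
    · rw [equiv1]; simp
    · rw [equiv1]; simp
    · intro c hc
      rw [char1] at hc
      rw [equiv1, equiv1, equiv1]
      simp
      omega
  · refine ⟨![0, 0], ![2, 0], ![-2, 0], ?_, ?_, ?_, ?_, ?_, ?_, ?_⟩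
    · refine ⟨(char2 _).mpr (by norm_num), by rw [covSq2]; norm_num, ?_⟩
      intro c' hch heq
      rw [covSq2]
      nlinarith [sq_nonneg ((c' 0:ℚ) - (c' 1:ℚ)), sq_nonneg (c' 0:ℚ), sq_nonneg (c' 1:ℚ)]
    · refine ⟨(char2 _).mpr (by norm_num), by rw [covSq2]; norm_num, ?_⟩
      intro c' hch heq
      rw [char2] at hch
      rw [equiv2] at heq
      simp at heq
      obtain ⟨a, ha⟩ := hch.1
      obtain ⟨b, hb⟩ := hch.2
      have hne : a ≠ 0 ∨ b ≠ 0 := by omega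
      have hk : (1:ℤ) ≤ a^2 - a*b + b^2 := key a b hne
      have hq : (1:ℚ) ≤ (a:ℚ)^2 - (a:ℚ)*(b:ℚ) + (b:ℚ)^2 := by exact_mod_cast hk
      rw [covSq2, ha, hb]
      push_cast
      nlinarith
    · refine ⟨(char2 _).mpr (by norm_num), by rw [covSq2]; norm_num, ?_⟩
      intro c' hch heq
      rw [char2] at hch
      rw [equiv2] at heq
      simp at heq
      obtain ⟨a, ha⟩ := hch.1
      obtain ⟨b, hb⟩ := hch.2
      have hne : a ≠ 0 ∨ b ≠ 0 := by omega
      have hk : (1:ℤ) ≤ a^2 - a*b + b^2 := key a b hne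
      have hq : (1:ℚ) ≤ (a:ℚ)^2 - (a:ℚ)*(b:ℚ) + (b:ℚ)^2 := by exact_mod_cast hk
      rw [covSq2, ha, hb]
      push_cast
      nlinarith
    · rw [equiv2]; simp
    · rw [equiv2]; simp
    · rw [equiv2]; simp
    · intro c hc
      rw [char2] at hc
      rw [equiv2, equiv2, equiv2]
      simp
      omega
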